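/- arXiv:2308.12884 — 4 statements merged into one kernel-verified Lean document; each statement's English description precedes it below -/
import Mathlib

section
/- Let n : ℝ → ℝ³ be differentiable, F : ℝ³ → ℝ be differentiable, and suppose n'(t) = −(n(t) × ∇F(n(t))) × n(t) for all t. Then d/dt F(n(t)) = −|∇F(n(t)) × n(t)|² ≤ 0. -/
open scoped RealInnerProductSpace

noncomputable def cross3 (a b : EuclideanSpace ℝ (Fin 3)) : EuclideanSpace ℝ (Fin 3) :=
  WithLp.toLp 2 (crossProduct a b)

lemma key (n g : EuclideanSpace ℝ (Fin 3)) :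
    ⟪g, -(cross3 (cross3 n g) n)⟫ = -‖cross3 g n‖ ^ 2 := by
  rw [← real_inner_self_eq_norm_sq]
  simp only [cross3, PiLp.inner_apply, RCLike.inner_apply, conj_trivial, inner_neg_right]
  simp [crossProduct, Fin.sum_univ_three]
  ring

theorem rotational_flow_energy_dissipation
    (F : EuclideanSpace ℝ (Fin 3) → ℝ) (hF : Differentiable ℝ F)
    (n : ℝ → EuclideanSpace ℝ (Fin 3))
    (hder : ∀ t, HasDerivAt n (-(cross3 (cross3 (n t) (gradient F (n t))) (n t))) t) :
    ∀ t : ℝ, HasDerivAt (fun s => F (n s)) (-‖cross3 (gradient F (n t)) (n t)‖ ^ 2) t ∧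
      -‖cross3 (gradient F (n t)) (n t)‖ ^ 2 ≤ 0 := by
  intro t
  constructor
  · have hg : HasGradientAt F (gradient F (n t)) (n t) :=
      (hF (n t)).hasGradientAt
    have := hg.hasFDerivAt.comp_hasDerivAt t (hder t)
    have heq : (InnerProductSpace.toDual ℝ (EuclideanSpace ℝ (Fin 3)) (gradient F (n t)))
        (-(cross3 (cross3 (n t) (gradient F (n t))) (n t)))
        = -‖cross3 (gradient F (n t)) (n t)‖ ^ 2 := by
      rw [InnerProductSpace.toDual_apply_apply]
      exact key (n t) (gradient F (n t))
    rw [heq] at this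
    exact this
  · exact neg_nonpos.mpr (sq_nonneg _)
end

section
/- Let n⁰, n¹, D be vectors in ℝ³ (or in a finite product of copies of ℝ³), τ > 0, and set m = (n⁰ + n¹)/2. If (n¹ − n⁰)/τ = −m × (D × m) (componentwise with the cross product in each ℝ³ factor), then |n¹ᵢ| = |n⁰ᵢ| for each component i. -/
open scoped RealInnerProductSpace

lemma inner_cross3_self (a b : EuclideanSpace ℝ (Fin 3)) :
    ⟪cross3 a b, a⟫ = 0 := by
  simp only [cross3, crossProduct, EuclideanSpace.inner_eq_star_dotProduct]
  simp [dotProduct, Fin.sum_univ_three]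
  ring

theorem discrete_rotational_update_length_preserving
    {k : ℕ} (n0 n1 D m : Fin k → EuclideanSpace ℝ (Fin 3)) (τ : ℝ) (hτ : 0 < τ)
    (hm : ∀ i, m i = (2⁻¹ : ℝ) • (n0 i + n1 i))
    (hupd : ∀ i, τ⁻¹ • (n1 i - n0 i) = -(cross3 (m i) (cross3 (D i) (m i)))) :
    ∀ i, ‖n1 i‖ = ‖n0 i‖ := by
  intro i
  have h0 : ⟪n1 i - n0 i, m i⟫ = 0 := by
    have := hupd i
    have h1 : ⟪τ⁻¹ • (n1 i - n0 i), m i⟫ = 0 := by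
      rw [this, inner_neg_left, inner_cross3_self]
      ring
    rw [real_inner_smul_left] at h1
    have : τ⁻¹ ≠ 0 := inv_ne_zero hτ.ne'
    exact (mul_eq_zero.mp h1).resolve_left this
  rw [hm i, real_inner_smul_right] at h0
  have h2 : ⟪n1 i - n0 i, n0 i + n1 i⟫ = 0 := by
    have : (2⁻¹ : ℝ) ≠ 0 := by norm_num
    exact (mul_eq_zero.mp h0).resolve_left this
  have h3 : ⟪n1 i, n1 i⟫ = ⟪n0 i, n0 i⟫ := by
    rw [inner_sub_left, inner_add_right, inner_add_right] at h2
    rw [real_inner_comm (n1 i) (n0 i)] at h2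
    linarith
  rw [norm_eq_sqrt_real_inner (n1 i), norm_eq_sqrt_real_inner (n0 i), h3]
end

section
/- Let F : V → ℝ on a finite-dimensional inner product space V, let n⁰, n¹ ∈ V, τ > 0, m = (n⁰ + n¹)/2 ∈ (ℝ³)^k, and D ∈ (ℝ³)^k satisfy the discrete gradient relation ⟨D, n¹ − n⁰⟩ = F(n¹) − F(n⁰). If (n¹ − n⁰)/τ = −m × (D × m) (componentwise cross product), then F(n¹) − F(n⁰) = −τ ‖D × m‖² ≤ 0. -/
open scoped RealInnerProductSpace

lemma cross3_key (d m : EuclideanSpace ℝ (Fin 3)) :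
    ⟪d, -(cross3 m (cross3 d m))⟫ = -‖cross3 d m‖ ^ 2 := by
  have h1 : ‖cross3 d m‖ ^ 2 = ⟪cross3 d m, cross3 d m⟫ := by
    rw [real_inner_self_eq_norm_sq]
  rw [h1]
  simp only [cross3, cross_apply, PiLp.inner_apply, RCLike.inner_apply, conj_trivial,
    Fin.sum_univ_three, Matrix.cons_val_zero, Matrix.cons_val_one, Matrix.head_cons,
    Matrix.cons_val_two, Matrix.tail_cons, PiLp.neg_apply, WithLp.ofLp_toLp]
  ring

theorem discrete_rotational_energy_dissipation
    {k : ℕ} (F : (Fin k → EuclideanSpace ℝ (Fin 3)) → ℝ)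
    (n0 n1 D m : Fin k → EuclideanSpace ℝ (Fin 3)) (τ : ℝ) (hτ : 0 < τ)
    (hm : ∀ i, m i = (2⁻¹ : ℝ) • (n0 i + n1 i))
    (hDG : ∑ i, ⟪D i, n1 i - n0 i⟫ = F n1 - F n0)
    (hupd : ∀ i, τ⁻¹ • (n1 i - n0 i) = -(cross3 (m i) (cross3 (D i) (m i)))) :
    F n1 - F n0 = -τ * ∑ i, ‖cross3 (D i) (m i)‖ ^ 2 ∧ F n1 - F n0 ≤ 0 := by
  have hdiff : ∀ i, n1 i - n0 i = τ • -(cross3 (m i) (cross3 (D i) (m i))) := by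
    intro i
    rw [← hupd i, smul_smul, mul_inv_cancel₀ hτ.ne', one_smul]
  have hmain : F n1 - F n0 = -τ * ∑ i, ‖cross3 (D i) (m i)‖ ^ 2 := by
    rw [← hDG, Finset.mul_sum]
    apply Finset.sum_congr rfl
    intro i _
    rw [hdiff i, real_inner_smul_right, cross3_key]
    ring
  refine ⟨hmain, ?_⟩
  rw [hmain]
  have : (0:ℝ) ≤ ∑ i, ‖cross3 (D i) (m i)‖ ^ 2 :=
    Finset.sum_nonneg fun i _ => sq_nonneg _
  nlinarith
end

section
/- Let n : ℝ → ℝ³ be differentiable with |n(0)| = 1 and n'(t) = −(n(t) × g(t)) × n(t). Then n(t) × n'(t) = −n(t) × g(t) for all t. -/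
open scoped RealInnerProductSpace
open Matrix

lemma cross3_triple (a b : Fin 3 → ℝ) :
    crossProduct a (crossProduct (crossProduct a b) a) = (a ⬝ᵥ a) • (crossProduct a b) := by
  funext i
  fin_cases i <;>
    simp [crossProduct, dotProduct, Fin.sum_univ_succ] <;> ring

lemma inner_eq_dot (x y : EuclideanSpace ℝ (Fin 3)) :
    ⟪x, y⟫ = dotProduct (x : Fin 3 → ℝ) (y : Fin 3 → ℝ) := by
  simp [PiLp.inner_apply, dotProduct, RCLike.inner_apply, mul_comm]

theorem rotational_to_constrained
    (n g : ℝ → EuclideanSpace ℝ (Fin 3))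
    (h0 : ‖n 0‖ = 1)
    (hder : ∀ t, HasDerivAt n (-(cross3 (cross3 (n t) (g t)) (n t))) t) :
    ∀ t, cross3 (n t) (deriv n t) = -(cross3 (n t) (g t)) := by
  -- ‖n t‖² is constant
  have hdF : ∀ t, HasDerivAt (fun t => ⟪n t, n t⟫) 0 t := by
    intro t
    have h := (hder t).inner ℝ (hder t)
    have hz : ⟪n t, -(cross3 (cross3 (n t) (g t)) (n t))⟫
        + ⟪-(cross3 (cross3 (n t) (g t)) (n t)), n t⟫ = 0 := by
      have hh : dotProduct (n t : Fin 3 → ℝ)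
          (crossProduct (crossProduct (n t) (g t)) (n t)) = 0 :=
        dot_cross_self _ _
      have hh' := hh
      rw [dotProduct_comm] at hh'
      simp only [cross3, inner_eq_dot, WithLp.ofLp_neg, WithLp.ofLp_toLp, dotProduct_neg, neg_dotProduct, hh, hh']
      simp only [dotProduct, Fin.sum_univ_three] at hh
      simp
    rwa [hz] at h
  have hdiff : Differentiable ℝ (fun t => ⟪n t, n t⟫) := fun t => (hdF t).differentiableAt
  have hconst : ∀ t, ⟪n t, n t⟫ = (1 : ℝ) := by
    intro t
    have := is_const_of_deriv_eq_zero hdiff (fun x => (hdF x).deriv) t 0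
    rw [this, real_inner_self_eq_norm_sq, h0]; norm_num
  intro t
  have hd : deriv n t = -(cross3 (cross3 (n t) (g t)) (n t)) := (hder t).deriv
  have hdot : dotProduct (n t : Fin 3 → ℝ) (n t : Fin 3 → ℝ) = 1 := by
    rw [← inner_eq_dot]; exact hconst t
  rw [hd]
  show WithLp.toLp 2 (crossProduct (n t).ofLp (-(cross3 (cross3 (n t) (g t)) (n t))).ofLp) = _
  rw [WithLp.ofLp_neg, map_neg]
  have h3 := cross3_triple (n t) (g t)
  rw [hdot, one_smul] at h3
  exact congrArg (WithLp.toLp 2) (congrArg Neg.neg h3)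
end
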